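/- For any real α and any real δ > 0, the expression p^{α+1/2} (1 - 1/r)^{α+1/2} r^{-(1+α)/(r-1) + 1/2} ((1+δ)/r^{1/(r-1)})^{(p(r-1))/2 - (1+α)} tends to infinity as both integer variables p ≥ 2 and r ≥ 2 tend to infinity. -/

import Mathlib

open Real

open Filter Topology in
private lemma aux_linlog (a b : ℝ) (ha : 0 < a) :
    Tendsto (fun x : ℝ => a * x + b * Real.log x) atTop atTop := by
  have hlog : Tendsto (fun x : ℝ => Real.log x / x) atTop (𝓝 0) := by
    have := Real.tendsto_pow_log_div_mul_add_atTop 1 0 1 one_ne_zero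
    simpa using this
  have h1 : Tendsto (fun x : ℝ => a + b * (Real.log x / x)) atTop (𝓝 a) := by
    have : Tendsto (fun x : ℝ => b * (Real.log x / x)) atTop (𝓝 0) := by
      simpa using hlog.const_mul b
    simpa using tendsto_const_nhds.add this
  have h2 : ∀ᶠ x : ℝ in atTop, a / 2 ≤ a + b * (Real.log x / x) :=
    h1.eventually_const_le (by linarith)
  apply tendsto_atTop_mono' atTop (f₁ := fun x => x * (a / 2))
  · filter_upwards [h2, eventually_gt_atTop (0 : ℝ)] with x hx hx0
    have : a * x + b * Real.log x = x * (a + b * (Real.log x / x)) := by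
      field_simp
    rw [this]
    exact mul_le_mul_of_nonneg_left hx hx0.le
  · exact Tendsto.atTop_mul_const (by linarith) tendsto_id

open Filter Topology in
/-- The Scenario 3 alternative-model expression tends to infinity as both p and r → ∞. -/
theorem scenario3_alt_divergence (α δ : ℝ) (hδ : 0 < δ) :
    ∀ M : ℝ, ∃ N : ℕ, ∀ p r : ℕ, N ≤ p → N ≤ r → 2 ≤ p → 2 ≤ r →
      M < (p : ℝ) ^ (α + 1 / 2) * (1 - 1 / (r : ℝ)) ^ (α + 1 / 2) *
        (r : ℝ) ^ (-(1 + α) / ((r : ℝ) - 1) + 1 / 2) *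
        ((1 + δ) / Real.exp (Real.log r / ((r : ℝ) - 1))) ^
          ((p : ℝ) * ((r : ℝ) - 1) / 2 - (1 + α)) := by
  intro M
  set s := Real.sqrt (1 + δ) with hs_def
  have h1δ : (1 : ℝ) < 1 + δ := by linarith
  have hs1 : 1 < s := by
    rw [show (1 : ℝ) = Real.sqrt 1 by simp]
    exact Real.sqrt_lt_sqrt (by norm_num) h1δ
  have hs0 : 0 < s := lt_trans one_pos hs1
  have hssq : s * s = 1 + δ := Real.mul_self_sqrt (by linarith)
  set K := min ((1/2 : ℝ) ^ (α + 1/2)) 1 with hK_def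
  have hK0 : 0 < K := lt_min (Real.rpow_pos_of_pos (by norm_num) _) one_pos
  -- r-eventual facts
  have htA : Tendsto (fun r : ℕ => Real.log r / ((r : ℝ) - 1)) atTop (𝓝 0) := by
    have h := Real.tendsto_pow_log_div_mul_add_atTop 1 (-1) 1 one_ne_zero
    simp only [pow_one, one_mul] at h
    have := h.comp (tendsto_natCast_atTop_atTop (R := ℝ))
    simpa [Function.comp_def, sub_eq_add_neg] using this
  have hA : ∀ᶠ r : ℕ in atTop, Real.exp (Real.log r / ((r : ℝ) - 1)) ≤ s := by
    have h : Tendsto (fun r : ℕ => Real.exp (Real.log r / ((r : ℝ) - 1))) atTop (𝓝 1) := by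
      have := (Real.continuous_exp.tendsto 0).comp htA
      simpa [Function.comp_def] using this
    exact (h.eventually_lt_const hs1).mono fun r h => h.le
  have hB : ∀ᶠ r : ℕ in atTop, 0 ≤ -(1 + α) / ((r : ℝ) - 1) + 1/2 := by
    have ht : Tendsto (fun r : ℕ => -(1 + α) / ((r : ℝ) - 1)) atTop (𝓝 0) := by
      apply Tendsto.div_atTop tendsto_const_nhds
      exact tendsto_atTop_add_const_right _ (-1) (tendsto_natCast_atTop_atTop (R := ℝ))
    exact (ht.eventually_const_lt (show (-(1/2) : ℝ) < 0 by norm_num)).mono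
      fun r h => by linarith
  -- p-eventual facts
  have hC : Tendsto (fun p : ℕ => (p : ℝ) ^ (α + 1/2) * K * s ^ ((p : ℝ)/2 - (1 + α)))
      atTop atTop := by
    have hL : 0 < Real.log s := Real.log_pos hs1
    have hg : Tendsto (fun x : ℝ => Real.log s / 2 * x + (α + 1/2) * Real.log x
        + (Real.log K - (1 + α) * Real.log s)) atTop atTop :=
      tendsto_atTop_add_const_right _ _ (aux_linlog _ _ (by positivity))
    have hexp := (Real.tendsto_exp_atTop.comp hg).comp (tendsto_natCast_atTop_atTop (R := ℝ))
    apply hexp.congr'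
    filter_upwards [eventually_gt_atTop 0] with p hp
    have hp0 : (0 : ℝ) < p := by exact_mod_cast hp
    show Real.exp _ = _
    rw [Real.rpow_def_of_pos hp0, Real.rpow_def_of_pos hs0, ← Real.exp_log hK0,
      ← Real.exp_add, ← Real.exp_add]
    congr 1
    rw [Real.log_exp]
    ring
  have hC' := hC.eventually_gt_atTop M
  have hD : ∀ᶠ p : ℕ in atTop, 0 ≤ (p : ℝ)/2 - (1 + α) := by
    have ht : Tendsto (fun p : ℕ => (p : ℝ)/2 - (1 + α)) atTop atTop := by
      have := (tendsto_natCast_atTop_atTop (R := ℝ)).atTop_div_const (show (0:ℝ) < 2 by norm_num)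
      simpa [sub_eq_add_neg] using tendsto_atTop_add_const_right _ (-(1 + α)) this
    exact ht.eventually_ge_atTop 0
  obtain ⟨N1, hN1⟩ := eventually_atTop.1 (hA.and hB)
  obtain ⟨N2, hN2⟩ := eventually_atTop.1 (hC'.and hD)
  refine ⟨max N1 N2, fun p r hp hr hp2 hr2 => ?_⟩
  obtain ⟨hexp_le, he⟩ := hN1 r (le_trans (le_max_left _ _) hr)
  obtain ⟨hMlt, hE0⟩ := hN2 p (le_trans (le_max_right _ _) hp)
  have hp2' : (2 : ℝ) ≤ p := by exact_mod_cast hp2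
  have hr2' : (2 : ℝ) ≤ r := by exact_mod_cast hr2
  have hp0 : (0 : ℝ) < p := by linarith
  have hr1 : (1 : ℝ) ≤ (r : ℝ) - 1 := by linarith
  have hinv : 1 / (r : ℝ) ≤ 1/2 := by
    rw [div_le_div_iff₀ (by linarith) (by norm_num)]; linarith
  have hinv0 : 0 < 1 / (r : ℝ) := by positivity
  have h1r : (0 : ℝ) < 1 - 1 / r := by linarith
  have f1 : K ≤ (1 - 1 / (r : ℝ)) ^ (α + 1/2) := by
    rcases le_or_gt 0 (α + 1/2) with hβ | hβ
    · exact (min_le_left _ _).trans (Real.rpow_le_rpow (by norm_num) (by linarith) hβ)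
    · exact (min_le_right _ _).trans
        (Real.one_le_rpow_of_pos_of_le_one_of_nonpos h1r (by linarith) hβ.le)
  have f2 : (1 : ℝ) ≤ (r : ℝ) ^ (-(1 + α) / ((r : ℝ) - 1) + 1/2) := by
    calc (1 : ℝ) = (r : ℝ) ^ (0 : ℝ) := (Real.rpow_zero _).symm
    _ ≤ _ := Real.rpow_le_rpow_of_exponent_le (by linarith) he
  have hE : (p : ℝ)/2 - (1 + α) ≤ (p : ℝ) * ((r : ℝ) - 1) / 2 - (1 + α) := by
    nlinarith
  have hEnn : 0 ≤ (p : ℝ) * ((r : ℝ) - 1) / 2 - (1 + α) := le_trans hE0 hE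
  have hsb : s ≤ (1 + δ) / Real.exp (Real.log r / ((r : ℝ) - 1)) := by
    have hs_eq : s = (1 + δ) / s := by rw [eq_div_iff hs0.ne']; exact hssq
    nth_rewrite 1 [hs_eq]
    gcongr
  have f3 : s ^ ((p : ℝ)/2 - (1 + α)) ≤
      ((1 + δ) / Real.exp (Real.log r / ((r : ℝ) - 1))) ^
        ((p : ℝ) * ((r : ℝ) - 1) / 2 - (1 + α)) := by
    calc s ^ ((p : ℝ)/2 - (1 + α)) ≤ s ^ ((p : ℝ) * ((r : ℝ) - 1) / 2 - (1 + α)) :=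
        Real.rpow_le_rpow_of_exponent_le hs1.le hE
    _ ≤ _ := Real.rpow_le_rpow hs0.le hsb hEnn
  have pnn : (0 : ℝ) ≤ (p : ℝ) ^ (α + 1/2) := Real.rpow_nonneg hp0.le _
  calc M < (p : ℝ) ^ (α + 1/2) * K * s ^ ((p : ℝ)/2 - (1 + α)) := hMlt
    _ = (p : ℝ) ^ (α + 1/2) * K * 1 * s ^ ((p : ℝ)/2 - (1 + α)) := by ring
    _ ≤ _ := by
      have h1 := mul_le_mul_of_nonneg_left f1 pnn
      have h2 : (p : ℝ) ^ (α + 1/2) * K * 1 ≤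
          (p : ℝ) ^ (α + 1/2) * (1 - 1 / (r : ℝ)) ^ (α + 1/2) *
            (r : ℝ) ^ (-(1 + α) / ((r : ℝ) - 1) + 1/2) :=
        mul_le_mul h1 f2 zero_le_one (mul_nonneg pnn (Real.rpow_nonneg h1r.le _))
      exact mul_le_mul h2 f3 (Real.rpow_nonneg hs0.le _)
        (mul_nonneg (mul_nonneg pnn (Real.rpow_nonneg h1r.le _))
          (Real.rpow_nonneg (by positivity) _))
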